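/- Boundedness of the exponentially damped recursion for the PN backward statistic: let 0 < α < 1 and suppose (Γ^{(t)})_{t≥1} and (Λ^{(t)})_{t≥1} are sequences of nonnegative reals with Γ^{(t)} ≤ C₁² < 1/(1−α) and Λ^{(t)} ≤ C₁C₂, and suppose there exist K ∈ ℕ and C₅ > 0 with C₅ < 1/(1−α) such that for every t > K and every j with K ≤ j ≤ t, the average (1/j)·Σ_{k=0}^{j−1} Γ^{(t−k+1)} ≥ C₅/2. Then the sequence defined by ν^{(0)} = 0 and ν^{(t)} = (1 − (1−α)·Γ^{(t)})·ν^{(t−1)} + (1−α)·Λ^{(t)} is uniformly bounded: there is a constant C (depending only on α, C₁, C₂, C₅, K) with |ν^{(t)}| ≤ C for all t. -/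
import Mathlib


/-- Boundedness of the exponentially damped recursion for the PN backward
statistic: under bounds `0 ≤ Γ t ≤ C₁² < 1/(1−α)`, `0 ≤ Λ t ≤ C₁·C₂`, and a
window lower bound on averages of `Γ`, the recursion
`ν^{(t)} = (1 − (1−α)Γ^{(t)})·ν^{(t−1)} + (1−α)·Λ^{(t)}` with `ν^{(0)} = 0`
stays uniformly bounded. -/
theorem pn_recursion_bounded (α C₁ C₂ C₅ : ℝ) (K : ℕ)
    (hα0 : 0 < α) (hα1 : α < 1)
    (Γ Λ ν : ℕ → ℝ)
    (hΓ : ∀ t, 0 ≤ Γ t ∧ Γ t ≤ C₁ ^ 2)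
    (hC₁ : C₁ ^ 2 < 1 / (1 - α))
    (hΛ : ∀ t, 0 ≤ Λ t ∧ Λ t ≤ C₁ * C₂)
    (hC₅0 : 0 < C₅) (hC₅ : C₅ < 1 / (1 - α))
    (hwindow : ∀ t > K, ∀ j, K ≤ j → j ≤ t →
      C₅ / 2 ≤ (1 / (j : ℝ)) * ∑ k ∈ Finset.range j, Γ (t - k + 1))
    (hν0 : ν 0 = 0)
    (hrec : ∀ t, ν (t + 1) = (1 - (1 - α) * Γ (t + 1)) * ν t + (1 - α) * Λ (t + 1)) :
    ∃ C : ℝ, ∀ t, |ν t| ≤ C := by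
  have h1α : (0:ℝ) < 1 - α := by linarith
  set q : ℕ → ℝ := fun x => 1 - (1 - α) * Γ x with hqdef
  have hq_pos : ∀ x, 0 < q x := by
    intro x
    have h2 : (1 - α) * Γ x ≤ (1 - α) * C₁ ^ 2 :=
      mul_le_mul_of_nonneg_left (hΓ x).2 h1α.le
    have h3 : (1 - α) * C₁ ^ 2 < 1 := by
      rw [lt_div_iff₀ h1α] at hC₁; linarith
    simp only [hqdef]; linarith
  have hq_le_one : ∀ x, q x ≤ 1 := by
    intro x
    have h1 := (hΓ x).1
    have : 0 ≤ (1 - α) * Γ x := mul_nonneg h1α.le h1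
    simp only [hqdef]; linarith
  have hq_exp : ∀ x, q x ≤ Real.exp (-((1 - α) * Γ x)) := by
    intro x
    have := Real.add_one_le_exp (-((1 - α) * Γ x))
    simp only [hqdef]; linarith
  set W : ℕ → ℝ := fun t => ∑ m ∈ Finset.range t, ∏ k ∈ Finset.range m, q (t - k)
    with hWdef
  have hWrec : ∀ t, W (t + 1) = q (t + 1) * W t + 1 := by
    intro t
    simp only [hWdef]
    rw [Finset.sum_range_succ']
    simp only [Finset.range_zero, Finset.prod_empty]
    congr 1
    rw [Finset.mul_sum]
    refine Finset.sum_congr rfl fun m _ => ?_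
    rw [Finset.prod_range_succ']
    have h1 : (fun k => q (t + 1 - (k + 1))) = fun k => q (t - k) := by
      funext k; congr 1; omega
    have h2 : t + 1 - 0 = t + 1 := by omega
    rw [h2]
    simp only [Nat.succ_sub_succ]
    ring
  set c : ℝ := (1 - α) * (C₁ * C₂) with hcdef
  have hC₁C₂ : 0 ≤ C₁ * C₂ := le_trans (hΛ 0).1 (hΛ 0).2
  have hc0 : 0 ≤ c := mul_nonneg h1α.le hC₁C₂
  have hW0 : ∀ t, 0 ≤ W t := by
    intro t
    exact Finset.sum_nonneg fun m _ => Finset.prod_nonneg fun k _ => (hq_pos _).le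
  have key : ∀ t, 0 ≤ ν t ∧ ν t ≤ c * W t := by
    intro t
    induction t with
    | zero => simp [hν0, hWdef]
    | succ t ih =>
      have hr := hrec t
      have hq := hq_pos (t + 1)
      have hΛ1 := hΛ (t + 1)
      have hqeq : (1 - (1 - α) * Γ (t + 1)) = q (t + 1) := by simp [hqdef]
      rw [hqeq] at hr
      constructor
      · rw [hr]
        have h1 : 0 ≤ (1 - α) * Λ (t + 1) := mul_nonneg h1α.le hΛ1.1
        have h2 : 0 ≤ q (t + 1) * ν t := mul_nonneg hq.le ih.1
        linarith
      · rw [hr, hWrec t]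
        have h1 : q (t + 1) * ν t ≤ q (t + 1) * (c * W t) :=
          mul_le_mul_of_nonneg_left ih.2 hq.le
        have h2 : (1 - α) * Λ (t + 1) ≤ c := by
          simp only [hcdef]; exact mul_le_mul_of_nonneg_left hΛ1.2 h1α.le
        have h3 : c * (q (t + 1) * W t + 1) = q (t + 1) * (c * W t) + c := by ring
        linarith
  set r : ℝ := Real.exp (-((1 - α) * C₅ / 2)) with hrdef
  have hr0 : 0 < r := Real.exp_pos _
  have hr1 : r < 1 := by
    rw [hrdef, Real.exp_lt_one_iff]
    nlinarith
  have hrsub : (0:ℝ) < 1 - r := by linarith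
  have hinv : (0:ℝ) ≤ 1 / (1 - r) := by positivity
  have hPle1 : ∀ t m, ∏ k ∈ Finset.range m, q (t - k) ≤ 1 := fun t m =>
    Finset.prod_le_one (fun k _ => (hq_pos _).le) (fun k _ => hq_le_one _)
  have hPexp : ∀ t m, K + 2 ≤ t → K ≤ m → m < t →
      ∏ k ∈ Finset.range m, q (t - k) ≤ r ^ m := by
    intro t m ht hK hm
    have hsum : (m : ℝ) * (C₅ / 2) ≤ ∑ k ∈ Finset.range m, Γ (t - k) := by
      rcases Nat.eq_zero_or_pos m with h | h
      · simp [h]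
      · have hw := hwindow (t - 1) (by omega) m hK (by omega)
        have heq : ∑ k ∈ Finset.range m, Γ (t - 1 - k + 1)
            = ∑ k ∈ Finset.range m, Γ (t - k) := by
          refine Finset.sum_congr rfl fun k hk => ?_
          simp only [Finset.mem_range] at hk
          congr 1
          omega
        rw [heq] at hw
        have hm0 : (0:ℝ) < m := by exact_mod_cast h
        rw [one_div, inv_mul_eq_div, le_div_iff₀ hm0] at hw
        nlinarith
    calc ∏ k ∈ Finset.range m, q (t - k)
        ≤ ∏ k ∈ Finset.range m, Real.exp (-((1 - α) * Γ (t - k))) :=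
          Finset.prod_le_prod (fun k _ => (hq_pos _).le) (fun k _ => hq_exp _)
      _ = Real.exp (∑ k ∈ Finset.range m, -((1 - α) * Γ (t - k))) :=
          (Real.exp_sum _ _).symm
      _ ≤ Real.exp ((m : ℝ) * (-((1 - α) * C₅ / 2))) := by
          apply Real.exp_le_exp.mpr
          have : ∑ k ∈ Finset.range m, -((1 - α) * Γ (t - k))
              = -((1 - α) * ∑ k ∈ Finset.range m, Γ (t - k)) := by
            rw [Finset.mul_sum, ← Finset.sum_neg_distrib]
          rw [this]
          nlinarith
      _ = r ^ m := by rw [hrdef, ← Real.exp_nat_mul]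
  have hgeom : ∀ n : ℕ, ∑ m ∈ Finset.range n, r ^ m ≤ 1 / (1 - r) := by
    intro n
    have h1 := geom_sum_mul r n
    have h2 : (0:ℝ) ≤ r ^ n := by positivity
    rw [le_div_iff₀ hrsub]
    nlinarith
  have hWbound : ∀ t, W t ≤ (K + 1 : ℝ) + 1 / (1 - r) := by
    intro t
    rcases le_or_gt t (K + 1) with h | h
    · calc W t ≤ ∑ m ∈ Finset.range t, (1:ℝ) :=
            Finset.sum_le_sum fun m _ => hPle1 t m
        _ = (t : ℝ) := by simp
        _ ≤ (K + 1 : ℝ) := by exact_mod_cast h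
        _ ≤ _ := by linarith
    · have hb : ∀ m ∈ Finset.range t, ∏ k ∈ Finset.range m, q (t - k)
          ≤ (if m < K then (1:ℝ) else 0) + r ^ m := by
        intro m hm
        simp only [Finset.mem_range] at hm
        by_cases hmk : m < K
        · have h2 : (0:ℝ) ≤ r ^ m := by positivity
          simp only [hmk, if_true]
          have := hPle1 t m
          linarith
        · simp only [hmk, if_false, zero_add]
          exact hPexp t m (by omega) (by omega) hm
      have hind : ∑ m ∈ Finset.range t, (if m < K then (1:ℝ) else 0) ≤ (K : ℝ) := by
        rw [Finset.sum_boole]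
        have hsub : (Finset.range t).filter (fun m => m < K) ⊆ Finset.range K := by
          intro x hx
          simp only [Finset.mem_filter, Finset.mem_range] at hx ⊢
          exact hx.2
        have := Finset.card_le_card hsub
        rw [Finset.card_range] at this
        exact_mod_cast this
      calc W t ≤ ∑ m ∈ Finset.range t, ((if m < K then (1:ℝ) else 0) + r ^ m) :=
            Finset.sum_le_sum hb
        _ = (∑ m ∈ Finset.range t, (if m < K then (1:ℝ) else 0))
            + ∑ m ∈ Finset.range t, r ^ m := Finset.sum_add_distrib
        _ ≤ (K : ℝ) + 1 / (1 - r) := add_le_add hind (hgeom t)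
        _ ≤ _ := by linarith
  refine ⟨c * ((K + 1 : ℝ) + 1 / (1 - r)), fun t => ?_⟩
  have hk := key t
  rw [abs_of_nonneg hk.1]
  calc ν t ≤ c * W t := hk.2
    _ ≤ c * ((K + 1 : ℝ) + 1 / (1 - r)) :=
        mul_le_mul_of_nonneg_left (hWbound t) hc0
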